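/- Let R be a commutative ring and let K = D^perf(R) be the homotopy category of bounded complexes of finitely generated projective R-modules. Then the ring homomorphisms λ : R → End(K) (sending r to the family of multiplication-by-r endomorphisms) and σ : End(K) → R (sending α to α_𝟙 ∈ End_K(𝟙) ≅ R, where 𝟙 is R concentrated in degree zero) induce mutually inverse ring isomorphisms between the reduced ring R_red = R/Nil(R) and the quotient End(K)/PNil(K). -/

import Mathlib

namespace Balmer

open CategoryTheory CategoryTheory.Limits

universe u

variable (R : Type u) [CommRing R]

/-- The homotopy category of cochain complexes of `R`-modules. -/
abbrev HtpyCat := HomotopyCategory (ModuleCat.{u} R) (ComplexShape.up ℤ)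

/-- The objects of `D^perf(R) = K^b(P(R))`: those complexes of `R`-modules which are
bounded and degreewise finitely generated projective. -/
def IsPerf (X : HtpyCat R) : Prop :=
  (∃ a b : ℤ, ∀ i : ℤ, (i < a ∨ b < i) → IsZero (X.as.X i)) ∧
  (∀ i : ℤ, Module.Finite R (X.as.X i) ∧ Module.Projective R (X.as.X i))

/-- `D^perf(R)`, the homotopy category of bounded complexes of finitely generated
projective `R`-modules, as a full subcategory of the homotopy category. -/
abbrev Dperf := ObjectProperty.FullSubcategory (IsPerf R)

/-- The complex `𝟙 = (⋯ → 0 → R → 0 → ⋯)` concentrated in degree zero, as an object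
of the homotopy category. -/
noncomputable def oneCplx : HtpyCat R :=
  (HomotopyCategory.quotient (ModuleCat.{u} R) (ComplexShape.up ℤ)).obj
    ((HomologicalComplex.single (ModuleCat.{u} R) (ComplexShape.up ℤ) 0).obj
      (ModuleCat.of R R))

variable {R}

/-- The `n`-fold composition of an endomorphism with itself. -/
def endPow {X : HtpyCat R} (f : X ⟶ X) : ℕ → (X ⟶ X)
  | 0 => 𝟙 X
  | (n + 1) => endPow f n ≫ f

/-- An endomorphism of the identity functor of `D^perf(R)` which commutes with the
translation (the shift of complexes, inherited from the homotopy category). -/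
structure REnd (R : Type u) [CommRing R] where
  app : ∀ X : Dperf R, X.obj ⟶ X.obj
  natural : ∀ {X Y : Dperf R} (f : X.obj ⟶ Y.obj), f ≫ app Y = app X ≫ f
  shift : ∀ (X Y : Dperf R) (e : Y.obj ≅ (shiftFunctor (HtpyCat R) (1 : ℤ)).obj X.obj),
    app Y = e.hom ≫ (shiftFunctor (HtpyCat R) (1 : ℤ)).map (app X) ≫ e.inv

/-- Multiplication (composition) in `End(D^perf(R))`. -/
def REnd.mul (α β : REnd R) : REnd R where
  app X := α.app X ≫ β.app X
  natural {X Y} f := by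
    try dsimp only
    rw [← Category.assoc, α.natural f, Category.assoc, β.natural f, ← Category.assoc]
  shift X Y e := by
    try dsimp only
    rw [α.shift X Y e, β.shift X Y e]
    simp only [Category.assoc, Iso.inv_hom_id_assoc, ← Functor.map_comp_assoc]

/-- The unit of `End(D^perf(R))`. -/
def REnd.one : REnd R where
  app X := 𝟙 X.obj
  natural {X Y} f := by (try dsimp only); rw [Category.comp_id, Category.id_comp]
  shift X Y e := by (try dsimp only); rw [CategoryTheory.Functor.map_id]; simp

/-- Addition in `End(D^perf(R))`. -/
def REnd.add (α β : REnd R) : REnd R where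
  app X := α.app X + β.app X
  natural {X Y} f := by
    try dsimp only
    rw [Preadditive.comp_add, Preadditive.add_comp, α.natural f, β.natural f]
  shift X Y e := by
    try dsimp only
    rw [Functor.map_add, α.shift X Y e, β.shift X Y e]
    simp [Preadditive.comp_add, Preadditive.add_comp]

/-- `α ∈ End(D^perf(R))` is pointwise nilpotent if each `α_X` is nilpotent. -/
def REnd.PNil (α : REnd R) : Prop :=
  ∀ X : Dperf R, ∃ n : ℕ, endPow (α.app X) (n + 1) = 0

/-! ### Auxiliary developments -/

section Aux

open HomologicalComplex

lemma REnd.ext' {α β : REnd R} (h : α.app = β.app) : α = β := by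
  cases α; cases β; cases h; rfl

variable (R) in
/-- The quotient functor to the homotopy category. -/
noncomputable abbrev QF : CochainComplex (ModuleCat.{u} R) ℤ ⥤ HtpyCat R :=
  HomotopyCategory.quotient (ModuleCat.{u} R) (ComplexShape.up ℤ)

lemma REnd.natural_pow (β : REnd R) {X Y : Dperf R} (f : X.obj ⟶ Y.obj) (n : ℕ) :
    f ≫ endPow (β.app Y) n = endPow (β.app X) n ≫ f := by
  induction n with
  | zero => simp [endPow]
  | succ n ih =>
    show f ≫ endPow (β.app Y) n ≫ β.app Y = (endPow (β.app X) n ≫ β.app X) ≫ f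
    rw [← Category.assoc, ih, Category.assoc, β.natural f, ← Category.assoc]

/-- Powers of an endomorphism of a chain complex. -/
def chPow {C : CochainComplex (ModuleCat.{u} R) ℤ} (g : C ⟶ C) : ℕ → (C ⟶ C)
  | 0 => 𝟙 C
  | n + 1 => chPow g n ≫ g

lemma QF_chPow {C : CochainComplex (ModuleCat.{u} R) ℤ} (g : C ⟶ C) (n : ℕ) :
    (QF R).map (chPow g n) = endPow ((QF R).map g) n := by
  induction n with
  | zero => simp [chPow, endPow]
  | succ n ih => show (QF R).map (chPow g n ≫ g) = _; rw [Functor.map_comp, ih]; rfl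

/-- The brutal truncation of a cochain complex, keeping degrees `≥ t`. -/
noncomputable def trunc (C : CochainComplex (ModuleCat.{u} R) ℤ) (t : ℤ) :
    CochainComplex (ModuleCat.{u} R) ℤ where
  X i := if t ≤ i then C.X i else ModuleCat.of R PUnit.{u+1}
  d i j := if h : t ≤ i ∧ t ≤ j then
    eqToHom (if_pos h.1) ≫ C.d i j ≫ eqToHom (if_pos h.2).symm else 0
  shape i j hij := by
    rw [C.shape i j hij]
    split_ifs <;> simp
  d_comp_d' i j k hij hjk := by
    by_cases h : t ≤ i ∧ t ≤ j
    · have h' : t ≤ j ∧ t ≤ k := ⟨h.2, by simp only [ComplexShape.up_Rel] at hjk; omega⟩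
      rw [dif_pos h, dif_pos h']
      simp
    · rw [dif_neg h, Limits.zero_comp]

lemma trunc_X_pos {C : CochainComplex (ModuleCat.{u} R) ℤ} {t i : ℤ} (h : t ≤ i) :
    (trunc C t).X i = C.X i := if_pos h

lemma trunc_X_isZero {C : CochainComplex (ModuleCat.{u} R) ℤ} {t i : ℤ} (h : i < t) :
    IsZero ((trunc C t).X i) := by
  have e : (trunc C t).X i = ModuleCat.of R PUnit.{u+1} := if_neg (by omega)
  rw [e]
  exact ModuleCat.isZero_of_subsingleton _

lemma trunc_d_pos {C : CochainComplex (ModuleCat.{u} R) ℤ} {t i j : ℤ} (h : t ≤ i) (h' : t ≤ j) :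
    (trunc C t).d i j =
      eqToHom (trunc_X_pos h) ≫ C.d i j ≫ eqToHom (trunc_X_pos h').symm :=
  dif_pos ⟨h, h'⟩

/-- The inclusion of the brutal truncation. -/
noncomputable def truncι (C : CochainComplex (ModuleCat.{u} R) ℤ) (t : ℤ) : trunc C t ⟶ C where
  f i := if h : t ≤ i then eqToHom (trunc_X_pos h) else 0
  comm' i j hij := by
    by_cases h : t ≤ i
    · have h' : t ≤ j := by simp only [ComplexShape.up_Rel] at hij; omega
      rw [dif_pos h, dif_pos h', trunc_d_pos h h']
      simp
    · rw [dif_neg h, Limits.zero_comp,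
        show (trunc C t).d i j = 0 from dif_neg (fun hc => h hc.1), Limits.zero_comp]

lemma truncι_f_pos {C : CochainComplex (ModuleCat.{u} R) ℤ} {t i : ℤ} (h : t ≤ i) :
    (truncι C t).f i = eqToHom (trunc_X_pos h) := dif_pos h

lemma subsingleton_of_isZero {M : ModuleCat.{u} R} (h : IsZero M) : Subsingleton M := by
  have h0 : (𝟙 M : M ⟶ M) = 0 := h.eq_of_src _ _
  refine ⟨fun a b => ?_⟩
  calc a = (𝟙 M : M ⟶ M).hom a := rfl
    _ = (0 : M ⟶ M).hom a := by rw [h0]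
    _ = (0 : M ⟶ M).hom b := rfl
    _ = (𝟙 M : M ⟶ M).hom b := by rw [h0]
    _ = b := rfl

lemma finProj_of_isZero {M : ModuleCat.{u} R} (h : IsZero M) :
    Module.Finite R M ∧ Module.Projective R M := by
  haveI := subsingleton_of_isZero h
  have e : (PUnit.{u+1} : Type u) ≃ₗ[R] M :=
    { toFun := fun _ => 0
      map_add' := by intros; simp
      map_smul' := by intros; simp
      invFun := fun _ => PUnit.unit
      left_inv := fun x => rfl
      right_inv := fun x => Subsingleton.elim _ _ }
  exact ⟨Module.Finite.equiv e, Module.Projective.of_equiv e⟩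

lemma isPerf_trunc (X : Dperf R) (t : ℤ) : IsPerf R ((QF R).obj (trunc X.obj.as t)) := by
  obtain ⟨⟨a, b, hb⟩, hfp⟩ := X.property
  constructor
  · refine ⟨a, b, fun i hi => ?_⟩
    by_cases h : t ≤ i
    · have e := trunc_X_pos (C := X.obj.as) (t := t) h
      show IsZero ((trunc X.obj.as t).X i)
      rw [e]
      exact hb i hi
    · exact trunc_X_isZero (by omega)
  · intro i
    by_cases h : t ≤ i
    · have e := trunc_X_pos (C := X.obj.as) (t := t) h
      show Module.Finite R ((trunc X.obj.as t).X i) ∧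
        Module.Projective R ((trunc X.obj.as t).X i)
      rw [e]
      exact hfp i
    · exact finProj_of_isZero (trunc_X_isZero (by omega))

variable (R) in
/-- The complex concentrated in a single degree. -/
noncomputable abbrev SObj (d : ℤ) (M : ModuleCat.{u} R) : CochainComplex (ModuleCat.{u} R) ℤ :=
  (single (ModuleCat.{u} R) (ComplexShape.up ℤ) d).obj M

lemma isPerf_single (d : ℤ) (M : ModuleCat.{u} R) [Module.Finite R M]
    [Module.Projective R M] : IsPerf R ((QF R).obj (SObj R d M)) := by
  constructor
  · exact ⟨d, d, fun i hi => isZero_single_obj_X _ d M i (by omega)⟩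
  · intro i
    by_cases h : i = d
    · subst h
      show Module.Finite R ((SObj R i M).X i) ∧ Module.Projective R ((SObj R i M).X i)
      rw [single_obj_X_self (ComplexShape.up ℤ) i M]
      exact ⟨‹_›, ‹_›⟩
    · exact finProj_of_isZero (isZero_single_obj_X _ d M i h)

variable (R) in
/-- The single complex as an object of `Dperf`. -/
noncomputable def SD (d : ℤ) (M : ModuleCat.{u} R) [Module.Finite R M]
    [Module.Projective R M] : Dperf R :=
  ⟨(QF R).obj (SObj R d M), isPerf_single d M⟩

/-- A complex concentrated in degree `d` is isomorphic to a single complex. -/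
noncomputable def isoSingleSelf (C : CochainComplex (ModuleCat.{u} R) ℤ) (d : ℤ)
    (h : ∀ i, i ≠ d → IsZero (C.X i)) : C ≅ SObj R d (C.X d) :=
  Hom.isoOfComponents
    (fun i => if hi : i = d then
        eqToIso (by subst hi; exact (single_obj_X_self (ComplexShape.up ℤ) i (C.X i)).symm)
      else (h i hi).iso (isZero_single_obj_X _ d _ i hi))
    (fun i j hij => by
      by_cases hj : j = d
      · have hi : i ≠ d := by simp only [ComplexShape.up_Rel] at hij; omega
        exact (h i hi).eq_of_src _ _
      · exact (isZero_single_obj_X _ d _ j hj).eq_of_tgt _ _)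

lemma eq_of_homotopy_single {M N : ModuleCat.{u} R} {d : ℤ}
    {f g : SObj R d M ⟶ SObj R d N} (h : Homotopy f g) : f = g := by
  apply from_single_hom_ext
  have hc := h.comm d
  rw [dNext_eq h.hom (show (ComplexShape.up ℤ).Rel d (d + 1) by simp),
    prevD_eq h.hom (show (ComplexShape.up ℤ).Rel (d - 1) d by simp)] at hc
  simpa using hc

lemma app_SD_zero (β : REnd R) (one : Dperf R) (eone : one.obj ≅ oneCplx R)
    (h1 : β.app one = 0) (d : ℤ) (M : ModuleCat.{u} R) [Module.Finite R M]
    [Module.Projective R M] : β.app (SD R d M) = 0 := by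
  suffices h : ∀ e : ℤ, ∀ (N : ModuleCat.{u} R) (_ : Module.Finite R N)
      (_ : Module.Projective R N), β.app (SD R e N) = 0 from h d M ‹_› ‹_›
  have step : ∀ e : ℤ,
      (∀ (N : ModuleCat.{u} R) (_ : Module.Finite R N) (_ : Module.Projective R N),
        β.app (SD R (e + 1) N) = 0) ↔
      (∀ (N : ModuleCat.{u} R) (_ : Module.Finite R N) (_ : Module.Projective R N),
        β.app (SD R e N) = 0) := by
    intro e
    have key : ∀ (N : ModuleCat.{u} R) (_ : Module.Finite R N) (_ : Module.Projective R N),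
        ∃ A : (SD R e N).obj ≅ (shiftFunctor (HtpyCat R) (1 : ℤ)).obj (SD R (e + 1) N).obj,
          β.app (SD R e N) = A.hom ≫
            (shiftFunctor (HtpyCat R) (1 : ℤ)).map (β.app (SD R (e + 1) N)) ≫ A.inv := by
      intro N _ _
      refine ⟨(((HomotopyCategory.singleFunctors (ModuleCat.{u} R)).shiftIso 1 e (e + 1)
          (by omega)).app N).symm, ?_⟩
      exact β.shift (SD R (e + 1) N) (SD R e N) _
    constructor
    · intro hyp N hf hp
      obtain ⟨A, hA⟩ := key N hf hp
      rw [hA, hyp N hf hp, Functor.map_zero, Limits.zero_comp, Limits.comp_zero]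
    · intro hyp N hf hp
      obtain ⟨A, hA⟩ := key N hf hp
      rw [hyp N hf hp] at hA
      have h3 : (shiftFunctor (HtpyCat R) (1 : ℤ)).map (β.app (SD R (e + 1) N)) = 0 := by
        calc (shiftFunctor (HtpyCat R) (1 : ℤ)).map (β.app (SD R (e + 1) N))
            = A.inv ≫ (A.hom ≫ (shiftFunctor (HtpyCat R) (1 : ℤ)).map
              (β.app (SD R (e + 1) N)) ≫ A.inv) ≫ A.hom := by simp
          _ = 0 := by rw [← hA, Limits.zero_comp, Limits.comp_zero]
      exact (shiftFunctor (HtpyCat R) (1 : ℤ)).map_injective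
        (by rw [h3, Functor.map_zero])
  have base : ∀ (N : ModuleCat.{u} R) (_ : Module.Finite R N) (_ : Module.Projective R N),
      β.app (SD R 0 N) = 0 := by
    intro N hf hp
    haveI : Module.Finite R (ModuleCat.of R R) := inferInstanceAs (Module.Finite R R)
    haveI : Module.Projective R (ModuleCat.of R R) := inferInstanceAs (Module.Projective R R)
    -- the object `R[0]`
    have hOne : β.app (SD R 0 (ModuleCat.of R R)) = 0 := by
      have e : (SD R 0 (ModuleCat.of R R)).obj ≅ one.obj := eone.symm
      have hnat := β.natural (X := SD R 0 (ModuleCat.of R R)) (Y := one) e.hom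
      rw [h1, Limits.comp_zero] at hnat
      rw [← cancel_mono e.hom, Limits.zero_comp]
      exact hnat.symm
    obtain ⟨c, hc⟩ := (QF R).map_surjective (β.app (SD R 0 N))
    obtain ⟨b, hb⟩ :=
      (single (ModuleCat.{u} R) (ComplexShape.up ℤ) 0).map_surjective c
    have hbz : b = 0 := by
      apply ModuleCat.hom_ext
      apply LinearMap.ext
      intro m
      set f : ModuleCat.of R R ⟶ N := ModuleCat.ofHom (LinearMap.toSpanSingleton R N m) with hf'
      have hnat := β.natural (X := SD R 0 (ModuleCat.of R R)) (Y := SD R 0 N)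
        ((QF R).map ((single (ModuleCat.{u} R) (ComplexShape.up ℤ) 0).map f))
      erw [hOne, Limits.zero_comp] at hnat
      erw [← hc, ← Functor.map_comp] at hnat
      have h0 : (QF R).map ((single (ModuleCat.{u} R) (ComplexShape.up ℤ) 0).map f ≫ c) =
          (QF R).map 0 := by rw [hnat, Functor.map_zero]; rfl
      have h2 := eq_of_homotopy_single (HomotopyCategory.homotopyOfEq _ _ h0)
      rw [← hb, ← Functor.map_comp] at h2
      have h3 : f ≫ b = 0 :=
        (single (ModuleCat.{u} R) (ComplexShape.up ℤ) 0).map_injective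
          (by rw [h2, Functor.map_zero])
      calc b.hom m = b.hom (f.hom (1 : R)) :=
            congrArg b.hom (LinearMap.toSpanSingleton_apply_one R ↑N m).symm
        _ = (f ≫ b).hom (1 : R) := rfl
        _ = 0 := by rw [h3]; rfl
    rw [← hc, ← hb, hbz, Functor.map_zero, Functor.map_zero]
    rfl
  intro e
  induction e using Int.induction_on with
  | zero => exact base
  | succ k ih => exact (step k).mpr ih
  | pred k ih =>
    have h2 := (step (-(k : ℤ) - 1)).mp
    rw [show (-(k : ℤ) - 1) + 1 = -(k : ℤ) by ring] at h2
    exact h2 ih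

lemma app_concentrated_zero (β : REnd R) (one : Dperf R) (eone : one.obj ≅ oneCplx R)
    (h1 : β.app one = 0) (X : Dperf R) (d : ℤ)
    (h : ∀ i, i ≠ d → IsZero (X.obj.as.X i)) : β.app X = 0 := by
  haveI : Module.Finite R (X.obj.as.X d) := (X.property.2 d).1
  haveI : Module.Projective R (X.obj.as.X d) := (X.property.2 d).2
  have e : X.obj ≅ (SD R d (X.obj.as.X d)).obj :=
    (QF R).mapIso (isoSingleSelf X.obj.as d h)
  have hS := app_SD_zero β one eone h1 d (X.obj.as.X d)
  have hnat := β.natural (X := X) (Y := SD R d (X.obj.as.X d)) e.hom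
  rw [hS, Limits.comp_zero] at hnat
  rw [← cancel_mono e.hom, Limits.zero_comp]
  exact hnat.symm

lemma key_nilpotent (β : REnd R) (one : Dperf R) (eone : one.obj ≅ oneCplx R)
    (h1 : β.app one = 0) (X : Dperf R) :
    ∃ m : ℕ, endPow (β.app X) (m + 1) = 0 := by
  suffices main : ∀ (n : ℕ) (a : ℤ) (Y : Dperf R),
      (∀ i : ℤ, i < a ∨ a + n < i → IsZero (Y.obj.as.X i)) →
      ∃ m : ℕ, endPow (β.app Y) (m + 1) = 0 by
    obtain ⟨⟨a, b, hb⟩, -⟩ := X.property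
    exact main (b - a).toNat a X (fun i hi => hb i (by omega))
  intro n
  induction n with
  | zero =>
    intro a Y hY
    refine ⟨0, ?_⟩
    have h0 := app_concentrated_zero β one eone h1 Y a (fun i hi => hY i (by omega))
    show 𝟙 Y.obj ≫ β.app Y = 0
    rw [h0, Limits.comp_zero]
  | succ n ih =>
    intro a Y hY
    set C := Y.obj.as with hC
    -- the truncated subcomplex, keeping degrees `≥ a + 1`
    let W : Dperf R := ⟨(QF R).obj (trunc C (a + 1)), isPerf_trunc Y (a + 1)⟩
    have hWsupp : ∀ i : ℤ, i < (a + 1) ∨ (a + 1) + n < i → IsZero (W.obj.as.X i) := by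
      intro i hi
      rcases hi with hi | hi
      · exact trunc_X_isZero hi
      · show IsZero ((trunc C (a + 1)).X i)
        by_cases h : a + 1 ≤ i
        · rw [trunc_X_pos h]
          exact hY i (Or.inr (by omega))
        · exact trunc_X_isZero (by omega)
    obtain ⟨m₀, hm₀⟩ := ih (a + 1) W hWsupp
    -- chain level representative of `β.app Y`
    obtain ⟨g, hg⟩ := (QF R).map_surjective (β.app Y)
    -- `β^(m₀+1)` kills the truncation inclusion
    have hj : (QF R).map (truncι C (a + 1)) ≫ endPow (β.app Y) (m₀ + 1) = 0 := by
      have hnp := β.natural_pow (X := W) (Y := Y) ((QF R).map (truncι C (a + 1))) (m₀ + 1)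
      erw [hnp, hm₀, Limits.zero_comp]
      rfl
    have hpow : endPow (β.app Y) (m₀ + 1) = (QF R).map (chPow g (m₀ + 1)) := by
      rw [QF_chPow, hg]
      rfl
    have hjq : (QF R).map (truncι C (a + 1) ≫ chPow g (m₀ + 1)) = (QF R).map 0 := by
      erw [Functor.map_comp, ← hpow, hj, Functor.map_zero]
    have s := HomotopyCategory.homotopyOfEq _ _ hjq
    -- β kills the projection onto the degree `a` part
    haveI : Module.Finite R (C.X a) := (Y.property.2 a).1
    haveI : Module.Projective R (C.X a) := (Y.property.2 a).2
    have hq0 : β.app (SD R a (C.X a)) = 0 := app_SD_zero β one eone h1 a (C.X a)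
    set q : C ⟶ SObj R a (C.X a) := mkHomToSingle (𝟙 (C.X a)) (fun i hi => by
      have hz : IsZero (C.X i) :=
        hY i (Or.inl (by simp only [ComplexShape.up_Rel] at hi; omega))
      rw [hz.eq_of_src (C.d i a) 0, Limits.zero_comp]) with hqdef
    have hqnat := β.natural (X := Y) (Y := SD R a (C.X a)) ((QF R).map q)
    erw [hq0, Limits.comp_zero] at hqnat
    have hgq : (QF R).map (g ≫ q) = (QF R).map 0 := by
      erw [Functor.map_comp, hg, ← hqnat, Functor.map_zero]
      rfl
    have t := HomotopyCategory.homotopyOfEq _ _ hgq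
    -- the bottom component of `g` factors through the differential
    have hga : g.f a = C.d a (a + 1) ≫
        (t.hom (a + 1) a ≫ (singleObjXSelf (ComplexShape.up ℤ) a (C.X a)).hom) := by
      have hc := t.comm a
      rw [dNext_eq t.hom (show (ComplexShape.up ℤ).Rel a (a + 1) by simp),
        prevD_eq t.hom (show (ComplexShape.up ℤ).Rel (a - 1) a by simp)] at hc
      simp only [single_obj_d, Limits.comp_zero, add_zero, HomologicalComplex.comp_f,
        HomologicalComplex.zero_f] at hc
      have hq_a : q.f a = (singleObjXSelf (ComplexShape.up ℤ) a (C.X a)).inv := by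
        rw [hqdef, mkHomToSingle_f]
        simp
      rw [hq_a] at hc
      calc g.f a = (g.f a ≫ (singleObjXSelf (ComplexShape.up ℤ) a (C.X a)).inv) ≫
            (singleObjXSelf (ComplexShape.up ℤ) a (C.X a)).hom := by simp
        _ = _ := by rw [hc]; simp [Category.assoc]; rfl
    -- the correction homotopy
    let σ : ∀ i j : ℤ, (ComplexShape.up ℤ).Rel j i → ((C.X i) ⟶ (C.X j)) := fun i j _ =>
      if h : a + 1 ≤ i then eqToHom (trunc_X_pos (C := C) h).symm ≫ s.hom i j else 0
    let hchain : C ⟶ C := chPow g (m₀ + 1) - Homotopy.nullHomotopicMap' σ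
    have hhf : ∀ i : ℤ, a + 1 ≤ i → hchain.f i = 0 := by
      intro i hi
      have hcomm := s.comm i
      rw [dNext_eq s.hom (show (ComplexShape.up ℤ).Rel i (i + 1) by simp),
        prevD_eq s.hom (show (ComplexShape.up ℤ).Rel (i - 1) i by simp)] at hcomm
      simp only [HomologicalComplex.comp_f, HomologicalComplex.zero_f, add_zero] at hcomm
      rw [truncι_f_pos hi, trunc_d_pos hi (by omega)] at hcomm
      have hnull : (Homotopy.nullHomotopicMap' σ).f i =
          C.d i (i + 1) ≫ σ (i + 1) i (by simp) + σ i (i - 1) (by simp) ≫ C.d (i - 1) i :=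
        Homotopy.nullHomotopicMap'_f (show (ComplexShape.up ℤ).Rel (i - 1) i by simp)
          (show (ComplexShape.up ℤ).Rel i (i + 1) by simp) σ
      show (chPow g (m₀ + 1) - Homotopy.nullHomotopicMap' σ).f i = 0
      rw [HomologicalComplex.sub_f_apply, hnull, sub_eq_zero]
      have hσ1 : σ (i + 1) i (by simp) =
          eqToHom (trunc_X_pos (C := C) (show a + 1 ≤ i + 1 by omega)).symm ≫
            s.hom (i + 1) i := dif_pos (by omega)
      have hσ2 : σ i (i - 1) (by simp) =
          eqToHom (trunc_X_pos (C := C) hi).symm ≫ s.hom i (i - 1) := dif_pos hi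
      rw [hσ1, hσ2]
      have hpre := congrArg (fun z => eqToHom (trunc_X_pos (C := C) hi).symm ≫ z) hcomm
      simpa only [Preadditive.comp_add, eqToHom_trans_assoc, eqToHom_refl,
        Category.id_comp, Category.assoc] using hpre
    -- the composite `hchain ≫ g` vanishes
    have hcomp : hchain ≫ g = 0 := by
      apply HomologicalComplex.hom_ext
      intro i
      rw [HomologicalComplex.comp_f, HomologicalComplex.zero_f]
      rcases lt_trichotomy i a with hlt | heq | hgt
      · exact (hY i (Or.inl hlt)).eq_of_src _ _
      · subst heq
        have hd : hchain.f i ≫ C.d i (i + 1) = 0 := by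
          rw [hchain.comm i (i + 1), hhf (i + 1) (by omega), Limits.comp_zero]
        rw [hga, ← Category.assoc, hd, Limits.zero_comp]
      · rw [hhf i (by omega), Limits.zero_comp]
    refine ⟨m₀ + 1, ?_⟩
    have hQnull : (QF R).map (Homotopy.nullHomotopicMap' σ) = 0 := by
      rw [HomotopyCategory.eq_of_homotopy _ 0 (Homotopy.nullHomotopy' σ), Functor.map_zero]
    have hQh : (QF R).map hchain = endPow (β.app Y) (m₀ + 1) := by
      rw [show hchain = chPow g (m₀ + 1) - Homotopy.nullHomotopicMap' σ from rfl,
        Functor.map_sub, hQnull, sub_zero, QF_chPow, hg]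
      rfl
    show endPow (β.app Y) (m₀ + 1) ≫ β.app Y = 0
    erw [← hQh, ← hg, ← Functor.map_comp, hcomp, Functor.map_zero]
    rfl

/-- Difference of two elements of `End(D^perf(R))`. -/
def REnd.sub (γ α : REnd R) : REnd R where
  app X := γ.app X - α.app X
  natural {X Y} f := by
    rw [Preadditive.comp_sub, Preadditive.sub_comp, γ.natural f, α.natural f]
  shift X Y e := by
    rw [Functor.map_sub, γ.shift X Y e, α.shift X Y e]
    simp [Preadditive.comp_sub, Preadditive.sub_comp]

lemma endPow_smul_id (r : R) (Xo : HtpyCat R) (n : ℕ) :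
    endPow (r • 𝟙 Xo) (n + 1) = r ^ (n + 1) • 𝟙 Xo := by
  induction n with
  | zero =>
    show 𝟙 Xo ≫ (r • 𝟙 Xo) = _
    rw [Category.id_comp, pow_one]
  | succ n ih =>
    show endPow (r • 𝟙 Xo) (n + 1) ≫ (r • 𝟙 Xo) = _
    rw [ih, Linear.comp_smul, Linear.smul_comp, Category.comp_id, smul_smul, ← pow_succ']

lemma endPow_eq_pow {Xo : HtpyCat R} (f : CategoryTheory.End Xo) (n : ℕ) :
    endPow (X := Xo) f n = f ^ n := by
  induction n with
  | zero => rfl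
  | succ n ih =>
    show endPow f n ≫ f = _
    rw [ih, pow_succ', CategoryTheory.End.mul_def]

end Aux

/-- Proposition 8.1 (3): with `K = D^perf(R)`, the ring homomorphisms
`λ : R → End(K)` (multiplication) and `σ : End(K) → R` (evaluation at
`𝟙 = R[0]`, via `End_K(𝟙) ≅ R`) induce mutually inverse ring isomorphisms
`R_red ≅ End(K)/PNil(K)`: both are ring homomorphisms, `σ ∘ λ = id_R`,
`λ(σ(α))` agrees with `α` up to a pointwise nilpotent element, `σ` sends pointwise
nilpotents into `Nil(R)` and `λ` sends `Nil(R)` into pointwise nilpotents. -/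
theorem stmt19
    (one : Dperf R)
    (eone : one.obj ≅ oneCplx R)
    (ε : CategoryTheory.End one.obj ≃+* R)
    (hε : ∀ r : R, ε (r • 𝟙 one.obj) = r)
    (lam : R → REnd R) (hlam : ∀ (r : R) (X : Dperf R), (lam r).app X = r • 𝟙 X.obj)
    (sig : REnd R → R) (hsig : ∀ α : REnd R, sig α = ε (α.app one)) :
    (∀ r s : R, lam (r * s) = (lam r).mul (lam s)) ∧
    (∀ r s : R, lam (r + s) = (lam r).add (lam s)) ∧
    lam 1 = REnd.one ∧
    (∀ α β : REnd R, sig (α.mul β) = sig α * sig β) ∧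
    (∀ α β : REnd R, sig (α.add β) = sig α + sig β) ∧
    sig REnd.one = 1 ∧
    (∀ r : R, sig (lam r) = r) ∧
    (∀ α : REnd R, ∀ X : Dperf R, ∃ n : ℕ,
      endPow ((lam (sig α)).app X - α.app X) (n + 1) = 0) ∧
    (∀ α : REnd R, α.PNil → IsNilpotent (sig α)) ∧
    (∀ r : R, IsNilpotent r → (lam r).PNil) := by
  refine ⟨?_, ?_, ?_, ?_, ?_, ?_, ?_, ?_, ?_, ?_⟩
  · intro r s
    apply REnd.ext'
    funext X
    show (lam (r * s)).app X = (lam r).app X ≫ (lam s).app X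
    rw [hlam, hlam, hlam, Linear.smul_comp, Linear.comp_smul, Category.comp_id, smul_smul]
  · intro r s
    apply REnd.ext'
    funext X
    show (lam (r + s)).app X = (lam r).app X + (lam s).app X
    rw [hlam, hlam, hlam, add_smul]
  · apply REnd.ext'
    funext X
    show (lam 1).app X = 𝟙 X.obj
    rw [hlam, one_smul]
  · intro α β
    rw [hsig, hsig, hsig]
    show ε (α.app one ≫ β.app one) = _
    rw [← CategoryTheory.End.mul_def, ε.map_mul, mul_comm]
  · intro α β
    rw [hsig, hsig, hsig]
    show ε (α.app one + β.app one) = _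
    rw [ε.map_add]
  · rw [hsig]
    show ε (𝟙 one.obj) = 1
    exact ε.map_one
  · intro r
    rw [hsig, hlam, hε]
  · intro α X
    have h1 : ((lam (sig α)).sub α).app one = 0 := by
      show (lam (sig α)).app one - α.app one = 0
      apply ε.injective
      rw [ε.map_sub, hlam, hε, ε.map_zero, hsig, sub_self]
    exact key_nilpotent ((lam (sig α)).sub α) one eone h1 X
  · intro α hα
    obtain ⟨n, hn⟩ := hα one
    refine ⟨n + 1, ?_⟩
    rw [hsig, ← ε.map_pow, ← endPow_eq_pow, hn, ε.map_zero]
  · rintro r ⟨n, hn⟩ X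
    refine ⟨n, ?_⟩
    rw [hlam, endPow_smul_id, pow_succ, hn, zero_mul, zero_smul]

end Balmer
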